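/- The van Genuchten–Mualem saturation function is Lipschitz continuous: let θ_R < θ_S, α > 0 and n > 1 be real parameters, and define θ : ℝ → ℝ by θ(ψ) = θ_R + (θ_S − θ_R)·(1 + (−αψ)^n)^{−(n−1)/n} for ψ ≤ 0 and θ(ψ) = θ_S for ψ > 0 (real powers). Then there exists a constant L_θ ≥ 0 such that |θ(ψ₁) − θ(ψ₂)| ≤ L_θ·|ψ₁ − ψ₂| for all ψ₁, ψ₂ ∈ ℝ. -/

import Mathlib

open Real Set

private lemma vg_key (n : ℝ) (hn : 1 < n) {a b : ℝ} (ha : 0 ≤ a) (hb : 0 ≤ b) :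
    |(1 + a ^ n) ^ (-(n - 1) / n) - (1 + b ^ n) ^ (-(n - 1) / n)| ≤ (n - 1) * |a - b| := by
  have hn0 : (0:ℝ) < n := lt_trans one_pos hn
  set p : ℝ := -(n - 1) / n with hp
  have hple0 : p ≤ 0 := by
    rw [hp]
    apply div_nonpos_of_nonpos_of_nonneg <;> linarith
  have hderiv : ∀ t ∈ Ici (0:ℝ),
      HasDerivWithinAt (fun t : ℝ => (1 + t ^ n) ^ p)
        (p * (1 + t ^ n) ^ (p - 1) * (n * t ^ (n - 1))) (Ici 0) t := by
    intro t ht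
    have h1 : (0:ℝ) < 1 + t ^ n := by
      have := Real.rpow_nonneg (mem_Ici.1 ht) n
      linarith
    have hu : HasDerivAt (fun t : ℝ => 1 + t ^ n) (n * t ^ (n - 1)) t := by
      simpa using (Real.hasDerivAt_rpow_const (p := n) (Or.inr hn.le)).const_add 1
    have hh : HasDerivAt (fun s : ℝ => s ^ p) (p * (1 + t ^ n) ^ (p - 1)) (1 + t ^ n) :=
      Real.hasDerivAt_rpow_const (Or.inl (ne_of_gt h1))
    exact (hh.comp t hu).hasDerivWithinAt
  have hbound : ∀ t ∈ Ici (0:ℝ),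
      ‖p * (1 + t ^ n) ^ (p - 1) * (n * t ^ (n - 1))‖ ≤ n - 1 := by
    intro t ht
    have ht0 : (0:ℝ) ≤ t := ht
    have htn : (0:ℝ) ≤ t ^ n := Real.rpow_nonneg ht0 n
    have h1 : (0:ℝ) < 1 + t ^ n := by linarith
    have hA : (0:ℝ) < (1 + t ^ n) ^ (p - 1) := Real.rpow_pos_of_pos h1 _
    have ht1 : (0:ℝ) ≤ t ^ (n - 1) := Real.rpow_nonneg ht0 _
    have key : t ^ (n - 1) * (1 + t ^ n) ^ (p - 1) ≤ 1 := by
      have e1 : t ^ (n - 1) = (t ^ n) ^ ((n - 1) / n) := by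
        rw [← Real.rpow_mul ht0]
        congr 1
        field_simp
      have e2 : (t ^ n) ^ ((n - 1) / n) ≤ (1 + t ^ n) ^ ((n - 1) / n) :=
        Real.rpow_le_rpow htn (by linarith) (div_nonneg (by linarith) hn0.le)
      have e3 : (1 + t ^ n) ^ ((n - 1) / n) * (1 + t ^ n) ^ (p - 1)
          = (1 + t ^ n) ^ (-1 : ℝ) := by
        rw [← Real.rpow_add h1]
        congr 1
        rw [hp]; field_simp; ring
      have e4 : (1 + t ^ n) ^ (-1 : ℝ) ≤ 1 :=
        Real.rpow_le_one_of_one_le_of_nonpos (by linarith) (by norm_num)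
      calc t ^ (n - 1) * (1 + t ^ n) ^ (p - 1)
          ≤ (1 + t ^ n) ^ ((n - 1) / n) * (1 + t ^ n) ^ (p - 1) := by
            apply mul_le_mul_of_nonneg_right _ hA.le
            rw [e1]; exact e2
        _ = (1 + t ^ n) ^ (-1 : ℝ) := e3
        _ ≤ 1 := e4
    have hpabs : |p| = (n - 1) / n := by
      rw [hp, abs_div, abs_neg, abs_of_nonneg (by linarith : (0:ℝ) ≤ n - 1),
        abs_of_pos hn0]
    calc ‖p * (1 + t ^ n) ^ (p - 1) * (n * t ^ (n - 1))‖
        = |p| * |(1 + t ^ n) ^ (p - 1)| * |n * t ^ (n - 1)| := by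
          rw [Real.norm_eq_abs, abs_mul, abs_mul]
      _ = (n - 1) * (t ^ (n - 1) * (1 + t ^ n) ^ (p - 1)) := by
          rw [hpabs, abs_of_pos hA, abs_of_nonneg (by positivity)]
          field_simp
      _ ≤ (n - 1) * 1 := by
          apply mul_le_mul_of_nonneg_left key (by linarith)
      _ = n - 1 := mul_one _
  have := (convex_Ici (0:ℝ)).norm_image_sub_le_of_norm_hasDerivWithin_le hderiv hbound
    (mem_Ici.2 hb) (mem_Ici.2 ha)
  simpa [Real.norm_eq_abs] using this

/-- The van Genuchten–Mualem saturation function: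
`θ(ψ) = θ_R + (θ_S − θ_R)·(1 + (−αψ)^n)^{−(n−1)/n}` for `ψ ≤ 0`,
and `θ(ψ) = θ_S` for `ψ > 0` (real powers). -/
noncomputable def vanGenuchten (θR θS α n : ℝ) (ψ : ℝ) : ℝ :=
  if ψ ≤ 0 then θR + (θS - θR) * (1 + (-(α * ψ)) ^ n) ^ (-(n - 1) / n)
  else θS

/-- The van Genuchten–Mualem saturation function is Lipschitz continuous:
there is `L_θ ≥ 0` with `|θ(ψ₁) − θ(ψ₂)| ≤ L_θ·|ψ₁ − ψ₂|` for all `ψ₁, ψ₂`. -/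
theorem vanGenuchten_lipschitz (θR θS α n : ℝ)
    (hθ : θR < θS) (hα : 0 < α) (hn : 1 < n) :
    ∃ Lθ : ℝ, 0 ≤ Lθ ∧ ∀ ψ₁ ψ₂ : ℝ,
      |vanGenuchten θR θS α n ψ₁ - vanGenuchten θR θS α n ψ₂| ≤ Lθ * |ψ₁ - ψ₂| := by
  have hn0 : (0:ℝ) < n := lt_trans one_pos hn
  set L : ℝ := (θS - θR) * ((n - 1) * α) with hL
  have hL0 : 0 ≤ L := by
    apply mul_nonneg (by linarith)
    apply mul_nonneg (by linarith) hα.le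
  -- value at 0 is θS
  have h0 : vanGenuchten θR θS α n 0 = θS := by
    simp [vanGenuchten, Real.zero_rpow (ne_of_gt hn0)]
  -- main estimate on the nonpositive side
  have main : ∀ ψ₁ ψ₂ : ℝ, ψ₁ ≤ 0 → ψ₂ ≤ 0 →
      |vanGenuchten θR θS α n ψ₁ - vanGenuchten θR θS α n ψ₂| ≤ L * |ψ₁ - ψ₂| := by
    intro ψ₁ ψ₂ h1 h2
    have ha : (0:ℝ) ≤ -(α * ψ₁) := by nlinarith
    have hb : (0:ℝ) ≤ -(α * ψ₂) := by nlinarith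
    have hk := vg_key n hn ha hb
    have hab : |-(α * ψ₁) - -(α * ψ₂)| = α * |ψ₁ - ψ₂| := by
      have e : -(α * ψ₁) - -(α * ψ₂) = α * (ψ₂ - ψ₁) := by ring
      rw [e, abs_mul, abs_of_pos hα, abs_sub_comm]
    rw [vanGenuchten, vanGenuchten, if_pos h1, if_pos h2]
    have : θR + (θS - θR) * (1 + (-(α * ψ₁)) ^ n) ^ (-(n - 1) / n)
        - (θR + (θS - θR) * (1 + (-(α * ψ₂)) ^ n) ^ (-(n - 1) / n))
        = (θS - θR) * ((1 + (-(α * ψ₁)) ^ n) ^ (-(n - 1) / n)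
          - (1 + (-(α * ψ₂)) ^ n) ^ (-(n - 1) / n)) := by ring
    rw [this, abs_mul, abs_of_pos (by linarith : (0:ℝ) < θS - θR)]
    calc (θS - θR) * |(1 + (-(α * ψ₁)) ^ n) ^ (-(n - 1) / n)
          - (1 + (-(α * ψ₂)) ^ n) ^ (-(n - 1) / n)|
        ≤ (θS - θR) * ((n - 1) * |-(α * ψ₁) - -(α * ψ₂)|) :=
          mul_le_mul_of_nonneg_left hk (by linarith)
      _ = L * |ψ₁ - ψ₂| := by rw [hab, hL]; ring
  refine ⟨L, hL0, ?_⟩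
  -- general case, reduce by symmetry and sign analysis
  have onesided : ∀ ψ₁ ψ₂ : ℝ,
      |vanGenuchten θR θS α n ψ₁ - vanGenuchten θR θS α n ψ₂| ≤ L * |ψ₁ - ψ₂| := by
    intro ψ₁ ψ₂
    by_cases h1 : ψ₁ ≤ 0
    · by_cases h2 : ψ₂ ≤ 0
      · exact main ψ₁ ψ₂ h1 h2
      · -- ψ₂ > 0
        push_neg at h2
        have e : vanGenuchten θR θS α n ψ₂ = vanGenuchten θR θS α n 0 := by
          rw [h0, vanGenuchten, if_neg (not_le.2 h2)]
        rw [e]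
        calc |vanGenuchten θR θS α n ψ₁ - vanGenuchten θR θS α n 0|
            ≤ L * |ψ₁ - 0| := main ψ₁ 0 h1 le_rfl
          _ ≤ L * |ψ₁ - ψ₂| := by
              apply mul_le_mul_of_nonneg_left _ hL0
              rw [sub_zero, abs_of_nonpos h1, abs_of_nonpos (by linarith)]
              linarith
    · by_cases h2 : ψ₂ ≤ 0
      · push_neg at h1
        have e : vanGenuchten θR θS α n ψ₁ = vanGenuchten θR θS α n 0 := by
          rw [h0, vanGenuchten, if_neg (not_le.2 h1)]
        rw [e, abs_sub_comm]
        calc |vanGenuchten θR θS α n ψ₂ - vanGenuchten θR θS α n 0|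
            ≤ L * |ψ₂ - 0| := main ψ₂ 0 h2 le_rfl
          _ ≤ L * |ψ₁ - ψ₂| := by
              apply mul_le_mul_of_nonneg_left _ hL0
              rw [sub_zero, abs_of_nonpos h2, abs_of_nonneg (by linarith)]
              linarith
      · rw [vanGenuchten, vanGenuchten, if_neg h1, if_neg h2, sub_self, abs_zero]
        positivity
  exact onesided
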